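/- Let m ≥ 2, n = 2m+1, q = 3^n, d = 2·3^m + 1, and d₀ = 3 - 2·3^{m+1} interpreted as an exponent modulo q - 1. For every z ∈ GF(q) with z ∉ GF(3) (so in particular z + 1 ≠ 0 and z^{3^{m+1}+2} + 1 ≠ 0 whenever the right side below is defined), the following identity holds: ((z^d + 1)/(z+1)^d)^{d₀} - 1 = z·(z^{3^{m+1}+1} - 1)² / (z^{3^{m+1}+2} + 1)², provided z^{3^{m+1}+2} + 1 ≠ 0. -/

import Mathlib

/-- For z ∈ GF(3^{2m+1}) \ GF(3) with z^{3^{m+1}+2} + 1 ≠ 0, with d = 2·3^m+1 and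
d₀ = 3 - 2·3^{m+1} (a possibly negative exponent, interpreted via zpow),
((z^d + 1)/(z+1)^d)^{d₀} - 1 = z·(z^{3^{m+1}+1} - 1)² / (z^{3^{m+1}+2} + 1)². -/
theorem stmt_6 (m : ℕ) (hm : 2 ≤ m) (z : GaloisField 3 (2 * m + 1))
    (hz0 : z ≠ 0) (hz1 : z ≠ 1) (hz2 : z ≠ -1)
    (hden : z ^ (3 ^ (m + 1) + 2) + 1 ≠ 0) :
    ((z ^ (2 * 3 ^ m + 1) + 1) / (z + 1) ^ (2 * 3 ^ m + 1)) ^ ((3 : ℤ) - 2 * 3 ^ (m + 1)) - 1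
      = z * (z ^ (3 ^ (m + 1) + 1) - 1) ^ 2 / (z ^ (3 ^ (m + 1) + 2) + 1) ^ 2 := by
  letI : Fintype (GaloisField 3 (2 * m + 1)) := Fintype.ofFinite _
  set s := z ^ (3 ^ m) with hs
  have hq : z ^ (3 ^ (2 * m + 1)) = z := by
    have hcard : Fintype.card (GaloisField 3 (2 * m + 1)) = 3 ^ (2 * m + 1) := by
      rw [← Nat.card_eq_fintype_card]; exact GaloisField.card 3 (2 * m + 1) (by omega)
    rw [← hcard]; exact FiniteField.pow_card z
  have h3m1 : z ^ (3 ^ (m + 1)) = s ^ 3 := by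
    rw [hs, ← pow_mul, ← pow_succ]
  have hsm1 : s ^ (3 ^ (m + 1)) = z := by
    rw [hs, ← pow_mul, ← pow_add, show m + (m + 1) = 2 * m + 1 by ring, hq]
  have frob : ∀ x y : GaloisField 3 (2 * m + 1),
      (x + y) ^ (3 : ℕ) ^ (m + 1) = x ^ (3:ℕ) ^ (m + 1) + y ^ (3:ℕ) ^ (m + 1) :=
    fun x y => add_pow_char_pow x y 3 (m + 1)
  have frobm : ∀ x y : GaloisField 3 (2 * m + 1),
      (x + y) ^ (3 : ℕ) ^ m = x ^ (3:ℕ) ^ m + y ^ (3:ℕ) ^ m :=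
    fun x y => add_pow_char_pow x y 3 m
  have cube : ∀ x y : GaloisField 3 (2 * m + 1), (x + y) ^ 3 = x ^ 3 + y ^ 3 :=
    fun x y => add_pow_char x y 3
  have hs2 : (s ^ 2) ^ (3:ℕ) ^ (m + 1) = z ^ 2 := by
    rw [pow_right_comm, hsm1]
  have hs1pow : ((s + 1) ^ 2) ^ (3:ℕ) ^ (m + 1) = (z + 1) ^ 2 := by
    rw [pow_right_comm, frob, one_pow, hsm1]
  -- rewriting facts
  have e1 : z ^ (2 * 3 ^ m + 1) = z * s ^ 2 := by
    rw [show 2 * 3 ^ m + 1 = 3 ^ m * 2 + 1 by ring, pow_succ, pow_mul, ← hs]; ring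
  have ezs1 : (z + 1) ^ (3 ^ m) = s + 1 := by rw [frobm, one_pow, ← hs]
  have e2 : (z + 1) ^ (2 * 3 ^ m + 1) = (s + 1) ^ 2 * (z + 1) := by
    rw [show 2 * 3 ^ m + 1 = 3 ^ m * 2 + 1 by ring, pow_succ, pow_mul, ezs1]
  have e3 : z ^ (3 ^ (m + 1) + 1) = s ^ 3 * z := by rw [pow_add, h3m1, pow_one]
  have e4 : z ^ (3 ^ (m + 1) + 2) = s ^ 3 * z ^ 2 := by rw [pow_add, h3m1]
  -- nonzeroness
  have hz1' : z + 1 ≠ 0 := by intro h; apply hz2; linear_combination h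
  have hs1' : s + 1 ≠ 0 := by rw [← ezs1]; exact pow_ne_zero _ hz1'
  have hs3' : s ^ 3 + 1 ≠ 0 := by
    have h : (s + 1) ^ 3 = s ^ 3 + 1 := by rw [cube, one_pow]
    rw [← h]; exact pow_ne_zero _ hs1'
  have hden' : s ^ 3 * z ^ 2 + 1 ≠ 0 := by rw [← e4]; exact hden
  have hpow : (z * s ^ 2 + 1) ^ (3:ℕ) ^ (m + 1) = s ^ 3 * z ^ 2 + 1 := by
    rw [frob, one_pow, mul_pow, hs2, h3m1]
  have hP' : z * s ^ 2 + 1 ≠ 0 := by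
    intro h
    apply hden'
    rw [← hpow, h, zero_pow (by positivity)]
  rw [show z ^ (2 * 3 ^ m + 1) + 1 = z * s ^ 2 + 1 by rw [e1], e2, e3, e4]
  set B := (z * s ^ 2 + 1) / ((s + 1) ^ 2 * (z + 1)) with hB
  have hBne : B ≠ 0 := div_ne_zero hP' (mul_ne_zero (pow_ne_zero _ hs1') hz1')
  have hzp : B ^ ((3 : ℤ) - 2 * 3 ^ (m + 1)) = B ^ (3:ℕ) / B ^ (2 * 3 ^ (m + 1) : ℕ) := by
    rw [show ((3 : ℤ) - 2 * 3 ^ (m + 1)) = ((3:ℕ):ℤ) - ((2 * 3 ^ (m+1) : ℕ):ℤ) by push_cast; ring,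
      zpow_sub₀ hBne, zpow_natCast, zpow_natCast]
  rw [hzp]
  have hBfrob : B ^ (3:ℕ) ^ (m + 1)
      = (s ^ 3 * z ^ 2 + 1) / ((z + 1) ^ 2 * (s ^ 3 + 1)) := by
    rw [hB, div_pow, hpow, mul_pow, hs1pow, frob, one_pow, h3m1]
  have hB2 : B ^ (2 * 3 ^ (m + 1) : ℕ)
      = ((s ^ 3 * z ^ 2 + 1) / ((z + 1) ^ 2 * (s ^ 3 + 1))) ^ 2 := by
    rw [mul_comm 2 ((3:ℕ) ^ (m+1)), pow_mul, hBfrob]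
  have hn : (z * s ^ 2 + 1) ^ 3 = z ^ 3 * (s ^ 2) ^ 3 + 1 := by
    rw [cube, one_pow, mul_pow]
  have hd : ((s + 1) ^ 2 * (z + 1)) ^ 3 = (s ^ 3 + 1) ^ 2 * (z + 1) ^ 3 := by
    rw [mul_pow, pow_right_comm, cube, one_pow]
  have hB3 : B ^ (3:ℕ) = (z ^ 3 * (s ^ 2) ^ 3 + 1) / ((s ^ 3 + 1) ^ 2 * (z + 1) ^ 3) := by
    rw [hB, div_pow, hn, hd]
  rw [hB2, hB3]
  field_simp
  rw [div_sub_one (pow_ne_zero 2 (by rw [mul_comm (z ^ 2) (s ^ 3)]; exact hden')),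
    div_left_inj' (pow_ne_zero 2 (by rw [mul_comm (z ^ 2) (s ^ 3)]; exact hden'))]
  ring
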